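/- Monad from a substitution system: if (T,α) is an (Id + H)-algebra forming a heterogeneous substitution system for (H,θ), with induced point η : Id → T and bracket ⦃−⦄, then (T, η, μ) is a monad on C, where μ := ⦃id_{(T,η)}⦄ : T·T → T is the bracket of the identity pointed morphism on (T,η). -/

import Mathlib

open CategoryTheory Limits

universe v u

/-- A pointed endofunctor on `C`. -/
structure Ptd (C : Type u) [Category.{v} C] where
  Z : C ⥤ C
  e : 𝟭 C ⟶ Z

/-- A *signature* over `C`: an endofunctor `H` on the endofunctor category `[C,C]`
together with a strength `θ : (H −)·U∼ ⟶ H (−·U∼)`, natural in both variables and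
satisfying the unit and composition coherence laws (here `X·Z` is the composite
`Z ⋙ X`, i.e. `A ↦ X (Z A)`). -/
structure Signature (C : Type u) [Category.{v} C] where
  H : (C ⥤ C) ⥤ (C ⥤ C)
  θ : ∀ (X : C ⥤ C) (Z : Ptd C), (Z.Z ⋙ H.obj X) ⟶ H.obj (Z.Z ⋙ X)
  θ_nat_X : ∀ {X X' : C ⥤ C} (α : X ⟶ X') (Z : Ptd C),
      Functor.whiskerLeft Z.Z (H.map α) ≫ θ X' Z = θ X Z ≫ H.map (Functor.whiskerLeft Z.Z α)
  θ_nat_Z : ∀ (X : C ⥤ C) {Z Z' : Ptd C} (g : Z.Z ⟶ Z'.Z), Z.e ≫ g = Z'.e →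
      Functor.whiskerRight g (H.obj X) ≫ θ X Z' = θ X Z ≫ H.map (Functor.whiskerRight g X)
  θ_id : ∀ X : C ⥤ C,
      θ X ⟨𝟭 C, 𝟙 (𝟭 C)⟩ =
        (Functor.leftUnitor (H.obj X)).hom ≫ H.map (Functor.leftUnitor X).inv
  θ_comp : ∀ (X : C ⥤ C) (Z Z' : Ptd C),
      θ X ⟨Z.Z ⋙ Z'.Z, Z.e ≫ Functor.whiskerLeft Z.Z Z'.e⟩ =
        (Functor.associator Z.Z Z'.Z (H.obj X)).hom ≫
          Functor.whiskerLeft Z.Z (θ X Z') ≫ θ (Z'.Z ⋙ X) Z ≫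
          H.map (Functor.associator Z.Z Z'.Z X).inv

variable {C : Type u} [Category.{v} C]

/-- A *heterogeneous substitution system* for a signature `(H, θ)`:
an `(Id + H)`-algebra, presented by its components `η : Id ⟶ T` and `τ : H T ⟶ T`,
together with, for every morphism of pointed endofunctors `f : (Z,e) ⟶ (T,η)`,
a unique bracket `⦃f⦄ : T·Z ⟶ T` satisfying the two substitution equations. -/
structure HSS (S : Signature C) where
  T : C ⥤ C
  η : 𝟭 C ⟶ T
  τ : S.H.obj T ⟶ T
  bracket : ∀ (Z : Ptd C) (f : Z.Z ⟶ T), Z.e ≫ f = η → (Z.Z ⋙ T ⟶ T)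
  bracket_η : ∀ (Z : Ptd C) (f : Z.Z ⟶ T) (hf : Z.e ≫ f = η),
      Functor.whiskerLeft Z.Z η ≫ bracket Z f hf = f
  bracket_τ : ∀ (Z : Ptd C) (f : Z.Z ⟶ T) (hf : Z.e ≫ f = η),
      Functor.whiskerLeft Z.Z τ ≫ bracket Z f hf = S.θ T Z ≫ S.H.map (bracket Z f hf) ≫ τ
  bracket_unique : ∀ (Z : Ptd C) (f : Z.Z ⟶ T) (hf : Z.e ≫ f = η)
      (h : Z.Z ⋙ T ⟶ T),
      Functor.whiskerLeft Z.Z η ≫ h = f →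
      Functor.whiskerLeft Z.Z τ ≫ h = S.θ T Z ≫ S.H.map h ≫ τ →
      h = bracket Z f hf

/-- **Monad from a substitution system** (Matthes–Uustalu, Thm. 10): if `(T,α)` is an
`(Id + H)`-algebra forming a heterogeneous substitution system for `(H,θ)`, with point
`η : Id ⟶ T` and bracket `⦃−⦄`, then `(T, η, μ)` with `μ := ⦃id_{(T,η)}⦄ : T·T ⟶ T`
is a monad on `C`: the two unit laws and the associativity law hold. -/
theorem monad_from_hss (S : Signature C) (hss : HSS S)
    (μ : hss.T ⋙ hss.T ⟶ hss.T)
    (hμ : μ = hss.bracket ⟨hss.T, hss.η⟩ (𝟙 hss.T) (Category.comp_id hss.η)) :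
    -- right unit law `μ ∘ η T = id`
    (Functor.whiskerLeft hss.T hss.η ≫ μ = 𝟙 hss.T) ∧
    -- left unit law `μ ∘ T η = id`
    (Functor.whiskerRight hss.η hss.T ≫ μ = 𝟙 hss.T) ∧
    -- associativity `μ ∘ μ T = μ ∘ T μ`
    (Functor.whiskerRight μ hss.T ≫ μ = Functor.whiskerLeft hss.T μ ≫ μ) := by
  obtain ⟨T, η, τ, br, brη, brτ, bru⟩ := hss
  dsimp only at hμ ⊢
  -- right unit law
  have L1 : Functor.whiskerLeft T η ≫ μ = 𝟙 T := by rw [hμ]; exact brη ⟨T, η⟩ (𝟙 T) (Category.comp_id η)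
  have runit : ∀ A : C, η.app (T.obj A) ≫ μ.app A = 𝟙 (T.obj A) := fun A => by
    simpa using congrArg (fun n => n.app A) L1
  have μτ : Functor.whiskerLeft T τ ≫ μ = S.θ T ⟨T, η⟩ ≫ S.H.map μ ≫ τ := by
    rw [hμ]; exact brτ ⟨T, η⟩ (𝟙 T) (Category.comp_id η)
  have μτc : ∀ A : C, τ.app (T.obj A) ≫ μ.app A =
      (S.θ T ⟨T, η⟩).app A ≫ (S.H.map μ).app A ≫ τ.app A := fun A => by
    simpa using congrArg (fun n => n.app A) μτ
  refine ⟨L1, ?_, ?_⟩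
  · -- left unit law
    have hP : (𝟙 (𝟭 C) : 𝟭 C ⟶ 𝟭 C) ≫ η = η := Category.id_comp _
    have e1 : (Functor.leftUnitor T).hom = br ⟨𝟭 C, 𝟙 (𝟭 C)⟩ η hP := by
      refine bru ⟨𝟭 C, 𝟙 (𝟭 C)⟩ η hP _ ?_ ?_
      · ext A; simp
      · rw [S.θ_id, Category.assoc, ← Functor.map_comp_assoc, Iso.inv_hom_id,
          CategoryTheory.Functor.map_id, Category.id_comp]
        ext A; simp
    have e2 : (Functor.whiskerRight η T ≫ μ : 𝟭 C ⋙ T ⟶ T) = br ⟨𝟭 C, 𝟙 (𝟭 C)⟩ η hP := by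
      refine bru ⟨𝟭 C, 𝟙 (𝟭 C)⟩ η hP _ ?_ ?_
      · ext A
        simp only [NatTrans.comp_app, Functor.whiskerLeft_app, Functor.whiskerRight_app,
          Functor.id_obj]
        have h := η.naturality (η.app A)
        simp only [Functor.id_map, Functor.comp_obj, Functor.id_obj] at h
        rw [← Category.assoc, ← h, Category.assoc, runit, Category.comp_id]
      · have nz := S.θ_nat_Z T (Z := ⟨𝟭 C, 𝟙 (𝟭 C)⟩) (Z' := ⟨T, η⟩) η
          (Category.id_comp _)
        ext A
        have nzA := congrArg (fun n => n.app A) nz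
        simp only [NatTrans.comp_app, Functor.whiskerRight_app] at nzA
        simp only [NatTrans.comp_app, Functor.whiskerLeft_app, Functor.whiskerRight_app,
          Functor.id_obj, Functor.comp_obj]
        rw [← Category.assoc, ← τ.naturality, Category.assoc, μτc,
          ← Category.assoc, nzA, Category.assoc]
        congr 1
        rw [← Category.assoc, ← NatTrans.comp_app, ← Functor.map_comp]
    have := e2.trans e1.symm
    ext A
    have hA := congrArg (fun n => n.app A) this
    simpa using hA
  · -- associativity
    have hQ : (η ≫ Functor.whiskerLeft T η : 𝟭 C ⟶ T ⋙ T) ≫ μ = η := by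
      rw [Category.assoc, L1, Category.comp_id]
    have e3 : (Functor.whiskerRight μ T ≫ μ : (T ⋙ T) ⋙ T ⟶ T) =
        br ⟨T ⋙ T, η ≫ Functor.whiskerLeft T η⟩ μ hQ := by
      refine bru ⟨T ⋙ T, η ≫ Functor.whiskerLeft T η⟩ μ hQ _ ?_ ?_
      · ext A
        simp only [NatTrans.comp_app, Functor.whiskerLeft_app, Functor.whiskerRight_app,
          Functor.comp_obj]
        have h := η.naturality (μ.app A)
        simp only [Functor.id_map, Functor.comp_obj, Functor.id_obj] at h
        rw [← Category.assoc, ← h, Category.assoc, runit, Category.comp_id]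
      · have nz := S.θ_nat_Z T (Z := ⟨T ⋙ T, η ≫ Functor.whiskerLeft T η⟩)
          (Z' := ⟨T, η⟩) μ hQ
        ext A
        have nzA := congrArg (fun n => n.app A) nz
        simp only [NatTrans.comp_app, Functor.whiskerRight_app] at nzA
        simp only [NatTrans.comp_app, Functor.whiskerLeft_app, Functor.whiskerRight_app,
          Functor.comp_obj]
        rw [← Category.assoc, ← τ.naturality, Category.assoc, μτc,
          ← Category.assoc, nzA, Category.assoc]
        congr 1
        rw [← Category.assoc, ← NatTrans.comp_app, ← Functor.map_comp]
    have e4 : (Functor.whiskerLeft T μ ≫ μ : (T ⋙ T) ⋙ T ⟶ T) =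
        br ⟨T ⋙ T, η ≫ Functor.whiskerLeft T η⟩ μ hQ := by
      refine bru ⟨T ⋙ T, η ≫ Functor.whiskerLeft T η⟩ μ hQ _ ?_ ?_
      · ext A
        simp only [NatTrans.comp_app, Functor.whiskerLeft_app, Functor.comp_obj]
        rw [← Category.assoc]
        simp [runit]
      · have hH : S.H.map (Functor.associator T T T).inv ≫
            S.H.map (Functor.whiskerLeft T μ ≫ μ : (T ⋙ T) ⋙ T ⟶ T) =
            S.H.map ((Functor.whiskerLeft T μ : T ⋙ (T ⋙ T) ⟶ T ⋙ T) ≫ μ) := by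
          rw [← S.H.map_comp]
          congr 1
          ext A
          simp
        have nx := S.θ_nat_X (X := T ⋙ T) (X' := T) μ ⟨T, η⟩
        ext A
        have nxA := congrArg (fun n => n.app A) nx
        simp only [NatTrans.comp_app, Functor.whiskerLeft_app] at nxA
        have hHA := congrArg (fun n => n.app A) hH
        simp only [NatTrans.comp_app] at hHA
        simp only [NatTrans.comp_app, Functor.whiskerLeft_app, Functor.comp_obj]
        rw [← Category.assoc, μτc, Category.assoc, Category.assoc, μτc]
        slice_lhs 2 3 => rw [nxA]
        rw [S.θ_comp T ⟨T, η⟩ ⟨T, η⟩]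
        simp only [NatTrans.comp_app, Functor.whiskerLeft_app, Functor.comp_obj,
          Functor.associator_hom_app, Category.id_comp, Category.assoc]
        slice_rhs 3 4 => rw [hHA]
        simp only [Functor.map_comp, NatTrans.comp_app, Category.assoc]
    exact e3.trans e4.symm
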